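/- Let T = {(x,y) ∈ ℝ² : x ≥ 0, y ≥ 0, x + y ≤ 1} be the standard triangle, and let λ_i(x,y) = 1 − x − y, λ_j(x,y) = x, λ_k(x,y) = y be the barycentric coordinates, with constant gradients ∇λ_i = (−1,−1), ∇λ_j = (1,0), ∇λ_k = (0,1). Given n×n complex matrices a_{ji}, a_{kj}, a_{ik}, define the matrix-valued vector field A = (A₁, A₂) on ℝ² by A(x,y) = a_{ji} ⊗ (λ_i ∇λ_j − λ_j ∇λ_i)(x,y) + a_{kj} ⊗ (λ_j ∇λ_k − λ_k ∇λ_j)(x,y) + a_{ik} ⊗ (λ_k ∇λ_i − λ_i ∇λ_k)(x,y), i.e. each matrix coefficient multiplies the corresponding scalar vector field. Then ∫_T ( ∂_x A₂ − ∂_y A₁ + [A₁, A₂] ) dx dy = (a_{ik} + a_{kj} + a_{ji}) + (1/6)( [a_{ji}, a_{kj}] + [a_{kj}, a_{ik}] + [a_{ik}, a_{ji}] ). -/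

import Mathlib

open MeasureTheory

/-- The standard triangle `T = {(x,y) : x ≥ 0, y ≥ 0, x + y ≤ 1}`. -/
def stdTriangle : Set (ℝ × ℝ) := {v | 0 ≤ v.1 ∧ 0 ≤ v.2 ∧ v.1 + v.2 ≤ 1}

/-- Barycentric coordinates on the standard triangle. -/
def lamI (v : ℝ × ℝ) : ℝ := 1 - v.1 - v.2
def lamJ (v : ℝ × ℝ) : ℝ := v.1
def lamK (v : ℝ × ℝ) : ℝ := v.2

/-- Their (constant) gradients. -/
def gradI : ℝ × ℝ := (-1, -1)
def gradJ : ℝ × ℝ := (1, 0)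
def gradK : ℝ × ℝ := (0, 1)

/-- The scalar Whitney vector field `λ_a ∇λ_b − λ_b ∇λ_a` attached to an edge `(b, a)`. -/
def whitneyField (lamA lamB : (ℝ × ℝ) → ℝ) (gradA gradB : ℝ × ℝ) (v : ℝ × ℝ) : ℝ × ℝ :=
  lamA v • gradB - lamB v • gradA

/-- First component `A₁` of the Lie-algebra-valued Whitney 1-form
`A = a_{ji} ⊗ (λ_i ∇λ_j − λ_j ∇λ_i) + a_{kj} ⊗ (λ_j ∇λ_k − λ_k ∇λ_j) + a_{ik} ⊗ (λ_k ∇λ_i − λ_i ∇λ_k)`,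
viewed as a pair of matrix-valued functions `(A₁, A₂)`. -/
noncomputable def whitneyA₁ {n : ℕ} (aji akj aik : Matrix (Fin n) (Fin n) ℂ)
    (v : ℝ × ℝ) : Matrix (Fin n) (Fin n) ℂ :=
  ((whitneyField lamI lamJ gradI gradJ v).1 : ℂ) • aji +
  ((whitneyField lamJ lamK gradJ gradK v).1 : ℂ) • akj +
  ((whitneyField lamK lamI gradK gradI v).1 : ℂ) • aik

/-- Second component `A₂` of the Lie-algebra-valued Whitney 1-form. -/
noncomputable def whitneyA₂ {n : ℕ} (aji akj aik : Matrix (Fin n) (Fin n) ℂ)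
    (v : ℝ × ℝ) : Matrix (Fin n) (Fin n) ℂ :=
  ((whitneyField lamI lamJ gradI gradJ v).2 : ℂ) • aji +
  ((whitneyField lamJ lamK gradJ gradK v).2 : ℂ) • akj +
  ((whitneyField lamK lamI gradK gradI v).2 : ℂ) • aik

/-! ### Auxiliary lemmas -/

lemma stdT_meas : MeasurableSet stdTriangle := by
  apply MeasurableSet.inter (measurableSet_le measurable_const measurable_fst)
  exact MeasurableSet.inter (measurableSet_le measurable_const measurable_snd)
    (measurableSet_le (measurable_fst.add measurable_snd) measurable_const)

lemma stdT_compact : IsCompact stdTriangle := by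
  apply Metric.isCompact_of_isClosed_isBounded
  · exact (isClosed_le continuous_const continuous_fst).inter
      ((isClosed_le continuous_const continuous_snd).inter
        (isClosed_le (continuous_fst.add continuous_snd) continuous_const))
  · apply Bornology.IsBounded.subset (Metric.isBounded_closedBall (x := (0:ℝ×ℝ)) (r := 1))
    rintro ⟨x, y⟩ ⟨hx, hy, hxy⟩
    simp only [Metric.mem_closedBall, dist_zero_right, Prod.norm_def, Real.norm_eq_abs,
      max_le_iff] at *
    constructor <;> rw [abs_of_nonneg ‹_›] <;> linarith

lemma setIntegral_stdTriangle (f : ℝ × ℝ → ℝ) (hf : Continuous f) :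
    ∫ v in stdTriangle, f v
      = ∫ x in Set.Icc (0:ℝ) 1, ∫ y in Set.Icc (0:ℝ) (1 - x), f (x, y) := by
  have hint : IntegrableOn f stdTriangle := hf.continuousOn.integrableOn_compact stdT_compact
  have hind : Integrable (stdTriangle.indicator f) :=
    (integrable_indicator_iff stdT_meas).mpr hint
  rw [← integral_indicator stdT_meas, ← integral_indicator measurableSet_Icc]
  rw [MeasureTheory.Measure.volume_eq_prod] at hind ⊢
  rw [MeasureTheory.integral_prod _ hind]
  congr 1; funext x
  by_cases hx : 0 ≤ x
  · have h1 : (fun y => stdTriangle.indicator f (x, y))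
        = (Set.Icc 0 (1 - x)).indicator (fun y => f (x, y)) := by
      funext y
      by_cases hy : y ∈ Set.Icc (0:ℝ) (1 - x)
      · rw [Set.indicator_of_mem hy]
        exact Set.indicator_of_mem
          (show (x,y) ∈ stdTriangle from ⟨hx, hy.1, by have := hy.2; simp only []; linarith⟩) f
      · rw [Set.indicator_of_notMem hy, Set.indicator_of_notMem]
        intro hmem
        exact hy (Set.mem_Icc.mpr ⟨hmem.2.1, by have := hmem.2.2; linarith⟩)
    rw [h1, integral_indicator measurableSet_Icc]
    by_cases hx1 : x ≤ 1
    · rw [Set.indicator_of_mem (Set.mem_Icc.mpr ⟨hx, hx1⟩)]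
    · rw [Set.indicator_of_notMem (fun h => hx1 h.2),
        Set.Icc_eq_empty (by intro h; exact hx1 (by linarith [h]))]
      simp
  · have h1 : (fun y => stdTriangle.indicator f (x, y)) = fun _ => 0 :=
      funext fun y => Set.indicator_of_notMem (fun h => hx h.1) f
    rw [h1, Set.indicator_of_notMem (fun h => hx h.1)]
    simp

lemma integral_poly_Icc01 (a b c : ℝ) :
    ∫ x in Set.Icc (0:ℝ) 1, (a + b * x + c * x ^ 2) = a + b / 2 + c / 3 := by
  rw [MeasureTheory.integral_Icc_eq_integral_Ioc,
      ← intervalIntegral.integral_of_le zero_le_one]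
  have key : ∀ x ∈ Set.uIcc (0:ℝ) 1,
      HasDerivAt (fun x : ℝ => a * x + b / 2 * x ^ 2 + c / 3 * x ^ 3)
        (a + b * x + c * x ^ 2) x := by
    intro x _
    have h : HasDerivAt (fun x : ℝ => a * x + b / 2 * x ^ 2 + c / 3 * x ^ 3)
        (a * 1 + b / 2 * (↑2 * x ^ 1) + c / 3 * (↑3 * x ^ 2)) x :=
      (((hasDerivAt_id x).const_mul a).add ((hasDerivAt_pow 2 x).const_mul (b / 2))).add
        ((hasDerivAt_pow 3 x).const_mul (c / 3))
    convert h using 1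
    ring
  rw [intervalIntegral.integral_eq_sub_of_hasDerivAt key
    ((Continuous.intervalIntegrable (by continuity) _ _))]
  ring

lemma inner_const (x c : ℝ) (hx : x ∈ Set.Icc (0:ℝ) 1) :
    ∫ _ in Set.Icc (0:ℝ) (1 - x), c = (1 - x) * c := by
  rw [setIntegral_const, Real.volume_real_Icc_of_le (by linarith [hx.2])]
  simp [smul_eq_mul]

lemma inner_id (x : ℝ) (hx : x ∈ Set.Icc (0:ℝ) 1) :
    ∫ y in Set.Icc (0:ℝ) (1 - x), y = (1 - x) ^ 2 / 2 := by
  rw [MeasureTheory.integral_Icc_eq_integral_Ioc,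
      ← intervalIntegral.integral_of_le (by linarith [hx.2])]
  simp [integral_id]

lemma int_T_one : ∫ _v in stdTriangle, (1 : ℝ) = 1 / 2 := by
  rw [setIntegral_stdTriangle _ continuous_const,
    setIntegral_congr_fun measurableSet_Icc (fun x hx => inner_const x 1 hx)]
  have := integral_poly_Icc01 1 (-1) 0
  rw [show (fun x : ℝ => (1 - x) * 1) = fun x : ℝ => 1 + (-1) * x + 0 * x ^ 2 by
    funext x; ring] at *
  linarith [this]

lemma int_T_fst : ∫ v in stdTriangle, v.1 = 1 / 6 := by
  rw [setIntegral_stdTriangle _ continuous_fst,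
    setIntegral_congr_fun measurableSet_Icc (fun x hx => inner_const x x hx)]
  have := integral_poly_Icc01 0 1 (-1)
  rw [show (fun x : ℝ => (1 - x) * x) = fun x : ℝ => 0 + 1 * x + (-1) * x ^ 2 by
    funext x; ring] at *
  linarith [this]

lemma int_T_snd : ∫ v in stdTriangle, v.2 = 1 / 6 := by
  rw [setIntegral_stdTriangle _ continuous_snd,
    setIntegral_congr_fun measurableSet_Icc (fun x hx => inner_id x hx)]
  have := integral_poly_Icc01 (1/2) (-1) (1/2)
  rw [show (fun x : ℝ => (1 - x) ^ 2 / 2) = fun x : ℝ => 1/2 + (-1) * x + 1/2 * x ^ 2 by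
    funext x; ring] at *
  linarith [this]

lemma int_T_affine (c0 c1 c2 : ℂ) :
    ∫ v in stdTriangle, (c0 + (v.1 : ℂ) * c1 + (v.2 : ℂ) * c2)
      = (1/2 : ℂ) * c0 + (1/6 : ℂ) * c1 + (1/6 : ℂ) * c2 := by
  have h0 : IntegrableOn (fun _ : ℝ × ℝ => c0) stdTriangle :=
    integrableOn_const stdT_compact.measure_lt_top.ne
  have h1 : IntegrableOn (fun v : ℝ × ℝ => (v.1 : ℂ) * c1) stdTriangle :=
    ((Complex.continuous_ofReal.comp continuous_fst).mul
      continuous_const).continuousOn.integrableOn_compact stdT_compact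
  have h2 : IntegrableOn (fun v : ℝ × ℝ => (v.2 : ℂ) * c2) stdTriangle :=
    ((Complex.continuous_ofReal.comp continuous_snd).mul
      continuous_const).continuousOn.integrableOn_compact stdT_compact
  have h01 : IntegrableOn (fun v : ℝ × ℝ => c0 + (v.1 : ℂ) * c1) stdTriangle := h0.add h1
  rw [integral_add h01 h2, integral_add h0 h1]
  have hvol : (volume stdTriangle).toReal = 1 / 2 := by
    have := int_T_one
    rwa [setIntegral_const, smul_eq_mul, mul_one] at this
  have e1 : ∫ v in stdTriangle, (v.1 : ℂ) * c1 = (1/6 : ℂ) * c1 := by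
    simp_rw [← Complex.real_smul]
    rw [integral_smul_const, int_T_fst, Complex.real_smul]
    norm_num
  have e2 : ∫ v in stdTriangle, (v.2 : ℂ) * c2 = (1/6 : ℂ) * c2 := by
    simp_rw [← Complex.real_smul]
    rw [integral_smul_const, int_T_snd, Complex.real_smul]
    norm_num
  rw [setIntegral_const, show volume.real stdTriangle = 1 / 2 from hvol, e1, e2, Complex.real_smul]
  norm_num

lemma hasDerivAt_ofReal' (x : ℝ) : HasDerivAt (fun t : ℝ => (t : ℂ)) 1 x := by
  simpa using (hasDerivAt_id x).ofReal_comp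

lemma derivA₂ {n : ℕ} (aji akj aik : Matrix (Fin n) (Fin n) ℂ) (p q : Fin n) (y x : ℝ) :
    deriv (fun t : ℝ => whitneyA₂ aji akj aik (t, y) p q) x
      = aji p q + akj p q + aik p q := by
  have hfun : (fun t : ℝ => whitneyA₂ aji akj aik (t, y) p q)
      = fun t : ℝ => (t : ℂ) * (aji p q + akj p q + aik p q) - aik p q := by
    funext t
    simp only [whitneyA₂, whitneyField, lamI, lamJ, lamK, gradI, gradJ, gradK,
      Prod.smul_mk, Prod.mk_sub_mk, smul_eq_mul, Matrix.add_apply, Matrix.smul_apply]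
    push_cast
    ring
  rw [hfun]
  simpa using (((hasDerivAt_ofReal' x).mul_const (aji p q + akj p q + aik p q)).sub_const (aik p q)).deriv

lemma derivA₁ {n : ℕ} (aji akj aik : Matrix (Fin n) (Fin n) ℂ) (p q : Fin n) (x y : ℝ) :
    deriv (fun t : ℝ => whitneyA₁ aji akj aik (x, t) p q) y
      = -(aji p q + akj p q + aik p q) := by
  have hfun : (fun t : ℝ => whitneyA₁ aji akj aik (x, t) p q)
      = fun t : ℝ => (t : ℂ) * (-(aji p q + akj p q + aik p q)) + aji p q := by
    funext t
    simp only [whitneyA₁, whitneyField, lamI, lamJ, lamK, gradI, gradJ, gradK,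
      Prod.smul_mk, Prod.mk_sub_mk, smul_eq_mul, Matrix.add_apply, Matrix.smul_apply]
    push_cast
    ring
  rw [hfun]
  have h := (((hasDerivAt_ofReal' y).mul_const
    (-(aji p q + akj p q + aik p q))).add_const (aji p q)).deriv
  simpa using h

lemma comm_eq {n : ℕ} (aji akj aik : Matrix (Fin n) (Fin n) ℂ) (v : ℝ × ℝ) :
    whitneyA₁ aji akj aik v * whitneyA₂ aji akj aik v
      - whitneyA₂ aji akj aik v * whitneyA₁ aji akj aik v
    = (v.1 : ℂ) • ⁅aji, akj⁆ + ((v.1 : ℂ) + (v.2 : ℂ) - 1) • ⁅aji, aik⁆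
        + (v.2 : ℂ) • ⁅akj, aik⁆ := by
  obtain ⟨x, y⟩ := v
  simp only [whitneyA₁, whitneyA₂, whitneyField, lamI, lamJ, lamK, gradI, gradJ, gradK,
    Prod.smul_mk, Prod.mk_sub_mk, smul_eq_mul, Ring.lie_def,
    mul_add, add_mul, smul_mul_assoc, mul_smul_comm, smul_smul]
  push_cast
  module

/-- Integral over the standard triangle of the curvature
`∂_x A₂ − ∂_y A₁ + [A₁, A₂]` of the Whitney 1-form with matrix coefficients
`a_{ji}, a_{kj}, a_{ik}`, computed entrywise:
`∫_T F(A) = (a_{ik} + a_{kj} + a_{ji}) + (1/6)([a_{ji},a_{kj}] + [a_{kj},a_{ik}] + [a_{ik},a_{ji}])`. -/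
theorem integral_curvature_whitney {n : ℕ}
    (aji akj aik : Matrix (Fin n) (Fin n) ℂ) (p q : Fin n) :
    (∫ v in stdTriangle,
        (deriv (fun t : ℝ => whitneyA₂ aji akj aik (t, v.2) p q) v.1
          - deriv (fun t : ℝ => whitneyA₁ aji akj aik (v.1, t) p q) v.2
          + (whitneyA₁ aji akj aik v * whitneyA₂ aji akj aik v
              - whitneyA₂ aji akj aik v * whitneyA₁ aji akj aik v) p q)) =
      ((aik + akj + aji) +
        ((1 : ℂ)/6) • (⁅aji, akj⁆ + ⁅akj, aik⁆ + ⁅aik, aji⁆)) p q := by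
  set C0 : ℂ := 2 * (aji p q + akj p q + aik p q) - ⁅aji, aik⁆ p q with hC0
  set C1 : ℂ := ⁅aji, akj⁆ p q + ⁅aji, aik⁆ p q with hC1
  set C2 : ℂ := ⁅aji, aik⁆ p q + ⁅akj, aik⁆ p q with hC2
  have hfun : ∀ v ∈ stdTriangle,
      (deriv (fun t : ℝ => whitneyA₂ aji akj aik (t, v.2) p q) v.1
          - deriv (fun t : ℝ => whitneyA₁ aji akj aik (v.1, t) p q) v.2
          + (whitneyA₁ aji akj aik v * whitneyA₂ aji akj aik v
              - whitneyA₂ aji akj aik v * whitneyA₁ aji akj aik v) p q)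
        = C0 + (v.1 : ℂ) * C1 + (v.2 : ℂ) * C2 := by
    intro v _
    rw [derivA₂, derivA₁, comm_eq, hC0, hC1, hC2]
    simp only [Matrix.add_apply, Matrix.smul_apply, smul_eq_mul, Matrix.sub_apply,
      Ring.lie_def]
    ring
  rw [setIntegral_congr_fun stdT_meas hfun, int_T_affine, hC0, hC1, hC2]
  simp only [Matrix.add_apply, Matrix.smul_apply, smul_eq_mul, Matrix.sub_apply,
    Ring.lie_def]
  ring
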